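/- Assume that for every action i there exists a contract q ∈ ℝ^m with all coordinates strictly positive such that BR(q) = {i}. Then for every valid dynamic contract π with Util(π) ≥ 0 and every ε > 0, there exists a valid dynamic contract π₀ such that Util₀(π₀) ≥ (1 − ε)·Util(π), where Util₀ counts only the utility contributed by non-degenerate segments. -/

import Mathlib

open Finset

/-- Agent's utility `u_A(p, i) = Σ_j F_{ij} p_j − c_i` from action `i` under
contract `p`. -/
noncomputable def uA (m : ℕ) (c : ℕ → ℝ) (F : ℕ → ℕ → ℝ) (p : ℕ → ℝ) (i : ℕ) : ℝ :=
  (∑ j ∈ Finset.Icc 1 m, F i j * p j) - c i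

/-- Principal's utility `u_P(p, i) = Σ_j F_{ij} (r_j − p_j)`. -/
noncomputable def uP (m : ℕ) (F : ℕ → ℕ → ℝ) (r : ℕ → ℝ) (p : ℕ → ℝ) (i : ℕ) : ℝ :=
  ∑ j ∈ Finset.Icc 1 m, F i j * (r j - p j)

/-- Best-response set of the agent to contract `p`. -/
def BRg (n m : ℕ) (c : ℕ → ℝ) (F : ℕ → ℕ → ℝ) (p : ℕ → ℝ) : Set ℕ :=
  {i | i ∈ Finset.Icc 1 n ∧ ∀ j ∈ Finset.Icc 1 n, uA m c F p j ≤ uA m c F p i}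

/-- A general dynamic contract with `K` segments (indexed `1,…,K`):
contracts `p k : ℕ → ℝ` (coordinates `1,…,m`), durations `τ`, actions `a`. -/
structure DGC where
  K : ℕ
  p : ℕ → ℕ → ℝ
  τ : ℕ → ℝ
  a : ℕ → ℕ

namespace DGC

/-- Total duration of the first `k` segments. -/
noncomputable def Tsum (π : DGC) (k : ℕ) : ℝ := ∑ j ∈ Finset.Icc 1 k, π.τ j

/-- Historical average contract `ρ^k` after the first `k` segments, with the
convention `ρ^0 := p^1`. -/
noncomputable def rho (π : DGC) (k : ℕ) (j : ℕ) : ℝ :=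
  if k = 0 then π.p 1 j
  else (∑ k' ∈ Finset.Icc 1 k, π.τ k' * π.p k' j) / π.Tsum k

/-- Validity of a general dynamic contract. -/
def Valid (n m : ℕ) (c : ℕ → ℝ) (F : ℕ → ℕ → ℝ) (π : DGC) : Prop :=
  1 ≤ π.K ∧
    (∀ k ∈ Finset.Icc 1 π.K,
      (∀ j ∈ Finset.Icc 1 m, 0 ≤ π.p k j) ∧ 0 < π.τ k ∧ π.a k ∈ Finset.Icc 1 n) ∧
    (∀ k ∈ Finset.Icc 1 π.K, π.a k ∈ BRg n m c F (π.rho k)) ∧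
    (∀ k, 2 ≤ k → k ≤ π.K → π.a k ∈ BRg n m c F (π.rho (k - 1)))

/-- Time-averaged principal utility. -/
noncomputable def Util (m : ℕ) (F : ℕ → ℕ → ℝ) (r : ℕ → ℝ) (π : DGC) : ℝ :=
  (∑ k ∈ Finset.Icc 1 π.K, π.τ k * uP m F r (π.p k) (π.a k)) / π.Tsum π.K

/-- Segment `k` is degenerate if `BR(ρ^{k-1}) ∩ BR(ρ^k)` has at least two
elements (with `ρ^0 := p^1`). -/
def Degenerate (n m : ℕ) (c : ℕ → ℝ) (F : ℕ → ℕ → ℝ) (π : DGC) (k : ℕ) : Prop :=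
  ∃ i j, i ≠ j ∧
    i ∈ BRg n m c F (π.rho (k - 1)) ∩ BRg n m c F (π.rho k) ∧
    j ∈ BRg n m c F (π.rho (k - 1)) ∩ BRg n m c F (π.rho k)

open scoped Classical in
/-- Time-averaged principal utility counting only non-degenerate segments. -/
noncomputable def Util0 (n m : ℕ) (c : ℕ → ℝ) (F : ℕ → ℕ → ℝ) (r : ℕ → ℝ)
    (π : DGC) : ℝ :=
  (∑ k ∈ Finset.Icc 1 π.K,
    if Degenerate n m c F π k then 0 else π.τ k * uP m F r (π.p k) (π.a k)) /
    π.Tsum π.K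

/-- Free-fall: the zero contract is offered on every segment after the first. -/
def FreeFall (π : DGC) : Prop := ∀ k, 2 ≤ k → k ≤ π.K → ∀ j, π.p k j = 0

end DGC

-- construction pieces
private noncomputable def Mco (C : ℝ) (k : ℕ) : ℝ := 2*(k:ℝ)*C
private noncomputable def Nco (C : ℝ) (k : ℕ) : ℝ := (2*(k:ℝ)-1)*C

private noncomputable def midw (π : DGC) (k : ℕ) (j : ℕ) : ℝ :=
  (1 - π.Tsum k / (2*π.Tsum (k-1) + π.τ k)) * π.rho (k-1) j
  + (π.Tsum k / (2*π.Tsum (k-1) + π.τ k)) * π.rho k j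

private noncomputable def tgt (π : DGC) (qa : ℕ → ℕ → ℝ) (C γ : ℝ) (l : ℕ) (j : ℕ) : ℝ :=
  if l % 2 = 1 then (1-γ) * midw π ((l+1)/2) j + γ * (qa ((l+1)/2) j + Nco C ((l+1)/2))
  else π.rho (l/2) j + γ * Mco C (l/2)

private noncomputable def Tt (π : DGC) (l : ℕ) : ℝ :=
  if l % 2 = 1 then π.Tsum ((l-1)/2) + π.τ ((l+1)/2) / 2 else π.Tsum (l/2)

private noncomputable def mixC (π : DGC) (qa : ℕ → ℕ → ℝ) (C γ : ℝ) : DGC where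
  K := 2*π.K
  p := fun l j => (Tt π l * tgt π qa C γ l j - Tt π (l-1) * tgt π qa C γ (l-1) j)
        / (π.τ ((l+1)/2) / 2)
  τ := fun l => π.τ ((l+1)/2) / 2
  a := fun l => π.a ((l+1)/2)

private lemma tgt_odd (π : DGC) (qa : ℕ → ℕ → ℝ) (C γ : ℝ) (k j : ℕ) (hk : 1 ≤ k) :
    tgt π qa C γ (2*k-1) j = (1-γ) * midw π k j + γ * (qa k j + Nco C k) := by
  have h1 : (2*k-1) % 2 = 1 := by omega
  have h2 : (2*k-1+1)/2 = k := by omega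
  simp only [tgt, h1, h2, if_true]

private lemma tgt_even (π : DGC) (qa : ℕ → ℕ → ℝ) (C γ : ℝ) (k j : ℕ) :
    tgt π qa C γ (2*k) j = π.rho k j + γ * Mco C k := by
  have h1 : ¬ ((2*k) % 2 = 1) := by omega
  have h2 : (2*k)/2 = k := by omega
  simp only [tgt, h2, if_neg h1]

private lemma Tt_odd (π : DGC) (k : ℕ) (hk : 1 ≤ k) :
    Tt π (2*k-1) = π.Tsum (k-1) + π.τ k / 2 := by
  have h1 : (2*k-1) % 2 = 1 := by omega
  have h2 : (2*k-1+1)/2 = k := by omega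
  have h3 : (2*k-1-1)/2 = k-1 := by omega
  simp only [Tt, h1, h2, h3, if_true]

private lemma Tt_even (π : DGC) (k : ℕ) : Tt π (2*k) = π.Tsum k := by
  have h1 : ¬ ((2*k) % 2 = 1) := by omega
  have h2 : (2*k)/2 = k := by omega
  simp only [Tt, h2, if_neg h1]

private lemma tele (g : ℕ → ℝ) (l : ℕ) :
    ∑ i ∈ Finset.Icc 1 l, (g i - g (i-1)) = g l - g 0 := by
  induction l with
  | zero => simp
  | succ t ih =>
      rw [Finset.sum_Icc_succ_top (by omega), ih]
      simp

private lemma pairsum (f : ℕ → ℝ) (K : ℕ) :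
    ∑ l ∈ Finset.Icc 1 (2*K), f l = ∑ k ∈ Finset.Icc 1 K, (f (2*k-1) + f (2*k)) := by
  induction K with
  | zero => simp
  | succ t ih =>
      have h1 : 2*(t+1) = (2*t+1)+1 := by omega
      rw [h1, Finset.sum_Icc_succ_top (by omega), Finset.sum_Icc_succ_top (by omega), ih,
        Finset.sum_Icc_succ_top (by omega)]
      have e1 : 2*(t+1)-1 = 2*t+1 := by omega
      have e2 : 2*(t+1) = 2*t+1+1 := by omega
      rw [e1, e2]
      ring

private lemma Tsum_zero (π : DGC) : π.Tsum 0 = 0 := by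
  simp [DGC.Tsum]

private lemma Tsum_step (π : DGC) (k : ℕ) (hk : 1 ≤ k) :
    π.Tsum k = π.Tsum (k-1) + π.τ k := by
  unfold DGC.Tsum
  rw [show k = (k-1)+1 by omega, Finset.sum_Icc_succ_top (by omega)]
  simp

private lemma Tsum_nonneg (π : DGC) (KK k : ℕ) (hτ : ∀ i, 1 ≤ i → i ≤ KK → 0 < π.τ i)
    (hk : k ≤ KK) : 0 ≤ π.Tsum k := by
  unfold DGC.Tsum
  refine Finset.sum_nonneg fun i hi => ?_
  simp only [Finset.mem_Icc] at hi
  exact (hτ i hi.1 (le_trans hi.2 hk)).le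

private lemma Tsum_pos (π : DGC) (KK k : ℕ) (hτ : ∀ i, 1 ≤ i → i ≤ KK → 0 < π.τ i)
    (hk1 : 1 ≤ k) (hk : k ≤ KK) : 0 < π.Tsum k := by
  rw [Tsum_step π k hk1]
  have h1 := Tsum_nonneg π KK (k-1) hτ (by omega)
  have h2 := hτ k hk1 hk
  linarith

private lemma rho_step (π : DGC) (KK k : ℕ) (hτ : ∀ i, 1 ≤ i → i ≤ KK → 0 < π.τ i)
    (hk1 : 1 ≤ k) (hk : k ≤ KK) (j : ℕ) :
    π.Tsum k * π.rho k j = π.Tsum (k-1) * π.rho (k-1) j + π.τ k * π.p k j := by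
  have hTk := Tsum_pos π KK k hτ hk1 hk
  have hrk : π.Tsum k * π.rho k j = ∑ k' ∈ Finset.Icc 1 k, π.τ k' * π.p k' j := by
    unfold DGC.rho
    rw [if_neg (by omega)]
    field_simp
  rw [hrk, show k = (k-1)+1 by omega, Finset.sum_Icc_succ_top (by omega)]
  rcases eq_or_lt_of_le hk1 with h1 | h2
  · simp only [← h1]
    norm_num [Tsum_zero]
  · have hk1' : 1 ≤ k - 1 := by omega
    have hTk' := Tsum_pos π KK (k-1) hτ hk1' (by omega)
    have hrk' : π.Tsum (k-1) * π.rho (k-1) j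
        = ∑ k' ∈ Finset.Icc 1 (k-1), π.τ k' * π.p k' j := by
      unfold DGC.rho
      rw [if_neg (by omega)]
      field_simp
    simp only [show k - 1 + 1 = k by omega, Nat.add_sub_cancel]
    rw [hrk']

private lemma midw_eq (π : DGC) (KK k : ℕ) (hτ : ∀ i, 1 ≤ i → i ≤ KK → 0 < π.τ i)
    (hk1 : 1 ≤ k) (hk : k ≤ KK) (j : ℕ) :
    (π.Tsum (k-1) + π.τ k / 2) * midw π k j
      = π.Tsum (k-1) * π.rho (k-1) j + (π.τ k / 2) * π.p k j := by
  have hstep := rho_step π KK k hτ hk1 hk j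
  have hTk := Tsum_step π k hk1
  have hA := Tsum_nonneg π KK (k-1) hτ (by omega)
  have hτk := hτ k hk1 hk
  have hd : 2 * π.Tsum (k-1) + π.τ k ≠ 0 := by linarith
  have hL1 : (π.Tsum (k-1) + π.τ k / 2) * (π.Tsum k / (2 * π.Tsum (k-1) + π.τ k))
      = π.Tsum k / 2 := by
    field_simp
  unfold midw
  linear_combination (π.rho k j - π.rho (k-1) j) * hL1 + (1/2) * hstep
    - (π.rho (k-1) j / 2) * hTk

private lemma mixC_Tsum (π : DGC) (qa : ℕ → ℕ → ℝ) (C γ : ℝ) (l : ℕ) :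
    (mixC π qa C γ).Tsum l = Tt π l := by
  induction l with
  | zero => rw [Tsum_zero]; simp [Tt, Tsum_zero]
  | succ t ih =>
      rw [Tsum_step _ (t+1) (by omega)]
      simp only [show t+1-1 = t by omega, ih]
      have hτ1 : (mixC π qa C γ).τ (t+1) = π.τ ((t+2)/2) / 2 := rfl
      rw [hτ1]
      rcases Nat.even_or_odd t with ⟨k, hk⟩ | ⟨k, hk⟩
      · have ht : t = 2*k := by omega
        subst ht
        rw [Tt_even, show 2*k+1 = 2*(k+1)-1 by omega, Tt_odd π (k+1) (by omega)]
        have h2 : (2*k+2)/2 = k+1 := by omega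
        rw [h2, show k+1-1 = k by omega]
      · have ht : t = 2*(k+1)-1 := by omega
        rw [ht, Tt_odd π (k+1) (by omega), show 2*(k+1)-1+1 = 2*(k+1) by omega, Tt_even,
          Tsum_step π (k+1) (by omega)]
        have h2 : (2*(k+1)-1+2)/2 = k+1 := by omega
        rw [h2, show k+1-1 = k by omega]
        ring

private lemma Tt_pos (π : DGC) (l : ℕ) (hτ : ∀ i, 1 ≤ i → i ≤ π.K → 0 < π.τ i)
    (hl1 : 1 ≤ l) (hl : l ≤ 2*π.K) : 0 < Tt π l := by
  rcases Nat.even_or_odd l with ⟨k, hk⟩ | ⟨k, hk⟩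
  · have hl2 : l = 2*k := by omega
    subst hl2
    rw [Tt_even]
    exact Tsum_pos π π.K k hτ (by omega) (by omega)
  · have hl2 : l = 2*(k+1)-1 := by omega
    subst hl2
    rw [Tt_odd π (k+1) (by omega)]
    have h1 := Tsum_nonneg π π.K k hτ (by omega)
    have h2 := hτ (k+1) (by omega) (by omega)
    rw [show k+1-1 = k by omega]
    linarith

private lemma mixC_rho (π : DGC) (qa : ℕ → ℕ → ℝ) (C γ : ℝ)
    (hτ : ∀ i, 1 ≤ i → i ≤ π.K → 0 < π.τ i)
    (l : ℕ) (hl1 : 1 ≤ l) (hl : l ≤ 2*π.K) (j : ℕ) :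
    (mixC π qa C γ).rho l j = tgt π qa C γ l j := by
  have hTt := mixC_Tsum π qa C γ l
  have hTtp := Tt_pos π l hτ hl1 hl
  unfold DGC.rho
  rw [if_neg (by omega), hTt]
  have hsum : ∑ k' ∈ Finset.Icc 1 l, (mixC π qa C γ).τ k' * (mixC π qa C γ).p k' j
      = ∑ k' ∈ Finset.Icc 1 l,
        (Tt π k' * tgt π qa C γ k' j - Tt π (k'-1) * tgt π qa C γ (k'-1) j) := by
    refine Finset.sum_congr rfl fun k' hk' => ?_
    simp only [Finset.mem_Icc] at hk'
    have hk2 : 1 ≤ (k'+1)/2 ∧ (k'+1)/2 ≤ π.K := by omega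
    have hτ' : π.τ ((k'+1)/2) / 2 ≠ 0 := by
      have := hτ _ hk2.1 hk2.2
      linarith
    show π.τ ((k'+1)/2)/2 * ((Tt π k' * tgt π qa C γ k' j
        - Tt π (k'-1) * tgt π qa C γ (k'-1) j) / (π.τ ((k'+1)/2)/2)) = _
    rw [mul_div_cancel₀ _ hτ']
  rw [hsum, tele (fun t => Tt π t * tgt π qa C γ t j) l]
  have h0 : Tt π 0 = 0 := by simp [Tt, Tsum_zero]
  rw [h0]
  field_simp
  ring

private lemma uA_combo (m : ℕ) (c : ℕ → ℝ) (F : ℕ → ℕ → ℝ) (w q : ℕ → ℝ) (i : ℕ)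
    (α β : ℝ) (h : α + β = 1) :
    uA m c F (fun j => α * w j + β * q j) i = α * uA m c F w i + β * uA m c F q i := by
  have e : ∑ j ∈ Finset.Icc 1 m, F i j * (α * w j + β * q j)
      = α * (∑ j ∈ Finset.Icc 1 m, F i j * w j) + β * (∑ j ∈ Finset.Icc 1 m, F i j * q j) := by
    rw [Finset.mul_sum, Finset.mul_sum, ← Finset.sum_add_distrib]
    exact Finset.sum_congr rfl (fun j _ => by ring)
  simp only [uA]
  rw [e]
  linear_combination (c i) * h

private lemma uA_shift (m : ℕ) (c : ℕ → ℝ) (F : ℕ → ℕ → ℝ) (w : ℕ → ℝ) (i : ℕ) (t : ℝ)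
    (hrow : ∑ j ∈ Finset.Icc 1 m, F i j = 1) :
    uA m c F (fun j => w j + t) i = uA m c F w i + t := by
  simp only [uA, mul_add]
  rw [Finset.sum_add_distrib, ← Finset.sum_mul, hrow]
  ring

private lemma BRg_shift (n m : ℕ) (c : ℕ → ℝ) (F : ℕ → ℕ → ℝ) (w : ℕ → ℝ) (t : ℝ)
    (hF : ∀ i ∈ Finset.Icc 1 n, ∑ j ∈ Finset.Icc 1 m, F i j = 1) :
    BRg n m c F (fun j => w j + t) = BRg n m c F w := by
  ext i
  simp only [BRg, Set.mem_setOf_eq]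
  constructor
  · rintro ⟨hi, h⟩
    refine ⟨hi, fun j hj => ?_⟩
    have := h j hj
    rw [uA_shift m c F w j t (hF j hj), uA_shift m c F w i t (hF i hi)] at this
    linarith
  · rintro ⟨hi, h⟩
    refine ⟨hi, fun j hj => ?_⟩
    rw [uA_shift m c F w j t (hF j hj), uA_shift m c F w i t (hF i hi)]
    linarith [h j hj]

private lemma BRg_combo_mem (n m : ℕ) (c : ℕ → ℝ) (F : ℕ → ℕ → ℝ) (w1 w2 : ℕ → ℝ) (a : ℕ)
    (lam : ℝ) (h0 : 0 ≤ lam) (h1 : lam ≤ 1)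
    (ha1 : a ∈ BRg n m c F w1) (ha2 : a ∈ BRg n m c F w2) :
    a ∈ BRg n m c F (fun j => (1-lam) * w1 j + lam * w2 j) := by
  obtain ⟨hai, h1'⟩ := ha1
  obtain ⟨_, h2'⟩ := ha2
  refine ⟨hai, fun j hj => ?_⟩
  rw [uA_combo m c F w1 w2 j (1-lam) lam (by ring),
    uA_combo m c F w1 w2 a (1-lam) lam (by ring)]
  have := h1' j hj
  have := h2' j hj
  nlinarith

private lemma BRg_mix_singleton (n m : ℕ) (c : ℕ → ℝ) (F : ℕ → ℕ → ℝ) (w q : ℕ → ℝ) (a : ℕ)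
    (γ : ℝ) (hγ0 : 0 < γ) (hγ1 : γ ≤ 1)
    (ha : a ∈ BRg n m c F w) (hq : BRg n m c F q = {a}) :
    BRg n m c F (fun j => (1-γ) * w j + γ * q j) = {a} := by
  have haq : a ∈ BRg n m c F q := by rw [hq]; rfl
  have hstrict : ∀ x ∈ Finset.Icc 1 n, x ≠ a → uA m c F q x < uA m c F q a := by
    intro x hx hxa
    have hxnot : x ∉ BRg n m c F q := by rw [hq]; simpa using hxa
    simp only [BRg, Set.mem_setOf_eq, not_and, not_forall] at hxnot
    obtain ⟨j, hj, hlt⟩ := hxnot hx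
    push_neg at hlt
    exact lt_of_lt_of_le hlt (haq.2 j hj)
  have hmem : a ∈ BRg n m c F (fun j => (1-γ) * w j + γ * q j) := by
    refine ⟨ha.1, fun j hj => ?_⟩
    rw [uA_combo m c F w q j (1-γ) γ (by ring), uA_combo m c F w q a (1-γ) γ (by ring)]
    rcases eq_or_ne j a with rfl | hja
    · exact le_refl _
    · have := ha.2 j hj
      have := hstrict j hj hja
      nlinarith
  ext x
  simp only [Set.mem_singleton_iff]
  constructor
  · rintro ⟨hx, hmax⟩
    by_contra hxa
    have h1 := hmax a ha.1
    rw [uA_combo m c F w q x (1-γ) γ (by ring), uA_combo m c F w q a (1-γ) γ (by ring)] at h1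
    have h2 := ha.2 x hx
    have h3 := hstrict x hx hxa
    nlinarith
  · rintro rfl
    exact hmem

private lemma uP_split (m : ℕ) (F : ℕ → ℕ → ℝ) (r : ℕ → ℝ) (p : ℕ → ℝ) (i : ℕ) :
    uP m F r p i = (∑ j ∈ Finset.Icc 1 m, F i j * r j) - ∑ j ∈ Finset.Icc 1 m, F i j * p j := by
  unfold uP
  rw [← Finset.sum_sub_distrib]
  exact Finset.sum_congr rfl fun j _ => by ring

set_option maxHeartbeats 1000000 in
/-- If every action can be uniquely incentivized by a strictly
positive contract, then for every valid dynamic contract `π` with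
`Util(π) ≥ 0` and every `ε > 0` there is a valid dynamic contract `π₀` whose
non-degenerate-segment utility `Util₀(π₀)` is at least `(1 − ε)·Util(π)`. -/
theorem non_degenerate_approximation (n m : ℕ) (c : ℕ → ℝ) (F : ℕ → ℕ → ℝ)
    (r : ℕ → ℝ) (hn : 1 ≤ n)
    (hc : ∀ i ∈ Finset.Icc 1 n, 0 ≤ c i)
    (hr : ∀ j ∈ Finset.Icc 1 m, 0 ≤ r j)
    (hF : ∀ i ∈ Finset.Icc 1 n,
      (∀ j ∈ Finset.Icc 1 m, 0 ≤ F i j) ∧ ∑ j ∈ Finset.Icc 1 m, F i j = 1)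
    (huniq : ∀ i ∈ Finset.Icc 1 n, ∃ q : ℕ → ℝ,
      (∀ j ∈ Finset.Icc 1 m, 0 < q j) ∧ BRg n m c F q = {i})
    (π : DGC) (hπ : π.Valid n m c F) (hU : 0 ≤ π.Util m F r)
    (ε : ℝ) (hε : 0 < ε) :
    ∃ π₀ : DGC, π₀.Valid n m c F ∧
      (1 - ε) * π.Util m F r ≤ π₀.Util0 n m c F r := by
  classical
  obtain ⟨hK1, hseg, hbr, hbr'⟩ := hπ
  have hτ : ∀ i, 1 ≤ i → i ≤ π.K → 0 < π.τ i := fun i h1 h2 =>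
    (hseg i (by simp only [Finset.mem_Icc]; omega)).2.1
  have han : ∀ k, 1 ≤ k → k ≤ π.K → π.a k ∈ Finset.Icc 1 n := fun k h1 h2 =>
    (hseg k (by simp only [Finset.mem_Icc]; omega)).2.2
  have hpnn : ∀ k, 1 ≤ k → k ≤ π.K → ∀ j ∈ Finset.Icc 1 m, 0 ≤ π.p k j := fun k h1 h2 =>
    (hseg k (by simp only [Finset.mem_Icc]; omega)).1
  have hrow : ∀ i ∈ Finset.Icc 1 n, ∑ j ∈ Finset.Icc 1 m, F i j = 1 := fun i hi => (hF i hi).2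
  have habr : ∀ k, 1 ≤ k → k ≤ π.K → π.a k ∈ BRg n m c F (π.rho k) := fun k h1 h2 =>
    hbr k (by simp only [Finset.mem_Icc]; omega)
  have habr' : ∀ k, 1 ≤ k → k ≤ π.K → π.a k ∈ BRg n m c F (π.rho (k-1)) := by
    intro k h1 h2
    rcases eq_or_lt_of_le h1 with h | h
    · have hre : π.rho (1-1) = π.rho 1 := by
        funext j
        have hτ1 := hτ 1 le_rfl hK1
        show π.p 1 j = _
        unfold DGC.rho
        rw [if_neg (by omega)]
        unfold DGC.Tsum
        rw [Finset.Icc_self, Finset.sum_singleton, Finset.sum_singleton,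
          mul_div_cancel_left₀ _ (ne_of_gt hτ1)]
      rw [← h, hre]
      exact habr 1 le_rfl hK1
    · exact hbr' k (by omega) h2
  have hrho_nn : ∀ k, k ≤ π.K → ∀ j ∈ Finset.Icc 1 m, 0 ≤ π.rho k j := by
    intro k hk j hj
    rcases Nat.eq_zero_or_pos k with rfl | hk1
    · show 0 ≤ π.p 1 j
      exact hpnn 1 le_rfl hK1 j hj
    · unfold DGC.rho
      rw [if_neg (by omega)]
      apply div_nonneg
      · refine Finset.sum_nonneg fun k' hk' => ?_
        simp only [Finset.mem_Icc] at hk'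
        exact mul_nonneg (hτ k' hk'.1 (by omega)).le (hpnn k' hk'.1 (by omega) j hj)
      · exact Tsum_nonneg π π.K k hτ hk
  rcases eq_or_lt_of_le hU with hU0 | hUpos
  · -- trivial case: Util = 0
    obtain ⟨a0, ha0mem, ha0max⟩ := Finset.exists_max_image (Finset.Icc 1 n)
      (uA m c F (fun _ => (0:ℝ))) ⟨1, by simp only [Finset.mem_Icc]; omega⟩
    refine ⟨⟨1, fun _ _ => 0, fun _ => 1, fun _ => a0⟩, ?_, ?_⟩
    · -- validity of trivial contract
      refine ⟨le_refl 1, ?_, ?_, ?_⟩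
      · intro k hk
        simp only [Finset.mem_Icc] at hk
        have hk1 : k = 1 := by omega
        subst hk1
        exact ⟨fun j _ => le_refl 0, one_pos, ha0mem⟩
      · intro k hk
        simp only [Finset.mem_Icc] at hk
        have hk1 : k = 1 := by omega
        subst hk1
        have hρ : (DGC.mk 1 (fun _ _ => 0) (fun _ => 1) (fun _ => a0)).rho 1
            = fun _ => (0:ℝ) := by
          funext j
          show (if (1:ℕ) = 0 then _ else _) = _
          rw [if_neg one_ne_zero]
          simp [DGC.Tsum]
        show a0 ∈ BRg n m c F _
        rw [hρ]
        exact ⟨ha0mem, ha0max⟩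
      · intro k h2 h1
        simp only at h1
        omega
    · -- utility of trivial contract
      have hnn : 0 ≤ DGC.Util0 n m c F r (DGC.mk 1 (fun _ _ => 0) (fun _ => 1) (fun _ => a0)) := by
        unfold DGC.Util0
        apply div_nonneg
        · apply Finset.sum_nonneg
          intro k hk
          split
          · exact le_refl 0
          · simp only [Finset.mem_Icc] at hk
            have hk1 : k = 1 := by omega
            subst hk1
            show 0 ≤ (1:ℝ) * uP m F r (fun _ => 0) a0
            have h0 : 0 ≤ uP m F r (fun _ => 0) a0 := by
              apply Finset.sum_nonneg
              intro j hj
              have := (hF a0 ha0mem).1 j hj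
              have := hr j hj
              have : (0:ℝ) ≤ r j - 0 := by linarith
              exact mul_nonneg (by exact (hF a0 ha0mem).1 j hj) this
            linarith
        · show (0:ℝ) ≤ DGC.Tsum _ 1
          simp [DGC.Tsum]
      rw [← hU0]
      nlinarith [hnn]
  · -- main construction
    choose! q hqpos hqBR using huniq
    obtain ⟨qa, hqapos, hqaBR⟩ : ∃ qa : ℕ → ℕ → ℝ,
        (∀ k, 1 ≤ k → k ≤ π.K → ∀ j ∈ Finset.Icc 1 m, 0 < qa k j)
        ∧ (∀ k, 1 ≤ k → k ≤ π.K → BRg n m c F (qa k) = {π.a k}) :=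
      ⟨fun k => q (π.a k), fun k h1 h2 => hqpos (π.a k) (han k h1 h2),
        fun k h1 h2 => hqBR (π.a k) (han k h1 h2)⟩
    obtain ⟨C, hC1, hCrho, hCqa⟩ : ∃ Cv : ℝ, 1 ≤ Cv
        ∧ (∀ k, k ≤ π.K → ∀ j ∈ Finset.Icc 1 m, π.rho k j ≤ Cv)
        ∧ (∀ k, k ≤ π.K → ∀ j ∈ Finset.Icc 1 m, qa k j ≤ Cv) := by
      refine ⟨1 + ∑ k ∈ Finset.Icc 0 π.K, ∑ j ∈ Finset.Icc 1 m, (|π.rho k j| + |qa k j|),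
        ?_, ?_, ?_⟩
      · have : (0:ℝ) ≤ ∑ k ∈ Finset.Icc 0 π.K, ∑ j ∈ Finset.Icc 1 m,
            (|π.rho k j| + |qa k j|) :=
          Finset.sum_nonneg fun k _ => Finset.sum_nonneg fun j _ => by positivity
        linarith
      all_goals {
        intro k hk j hj
        have h1 : |π.rho k j| + |qa k j| ≤ ∑ j' ∈ Finset.Icc 1 m, (|π.rho k j'| + |qa k j'|) :=
          Finset.single_le_sum (f := fun j' => |π.rho k j'| + |qa k j'|)
            (fun j' _ => by positivity) hj
        have h2 : (∑ j' ∈ Finset.Icc 1 m, (|π.rho k j'| + |qa k j'|))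
            ≤ ∑ k' ∈ Finset.Icc 0 π.K, ∑ j' ∈ Finset.Icc 1 m, (|π.rho k' j'| + |qa k' j'|) :=
          Finset.single_le_sum
            (f := fun k' => ∑ j' ∈ Finset.Icc 1 m, (|π.rho k' j'| + |qa k' j'|))
            (fun k' _ => Finset.sum_nonneg fun j' _ => by positivity)
            (by simp only [Finset.mem_Icc]; omega)
        have h3 := le_abs_self (π.rho k j)
        have h4 := le_abs_self (qa k j)
        have h5 := abs_nonneg (qa k j)
        have h6 := abs_nonneg (π.rho k j)
        linarith }
    obtain ⟨γ, hγ0, hγ1, hγb⟩ : ∃ γv : ℝ, 0 < γv ∧ γv ≤ 1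
        ∧ γv * (2*(π.K:ℝ)*C) ≤ ε * π.Util m F r := by
      have hKpos : (0:ℝ) < 2 * (π.K:ℝ) * C := by
        have : (1:ℝ) ≤ (π.K:ℝ) := by exact_mod_cast hK1
        nlinarith
      refine ⟨min 1 (ε * π.Util m F r / (2 * (π.K:ℝ) * C)),
        lt_min one_pos (div_pos (mul_pos hε hUpos) hKpos), min_le_left _ _, ?_⟩
      have h1 : min 1 (ε * π.Util m F r / (2 * (π.K:ℝ) * C))
          ≤ ε * π.Util m F r / (2 * (π.K:ℝ) * C) := min_le_right _ _
      rw [le_div_iff₀ hKpos] at h1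
      exact h1
    -- key BR facts
    have hBodd : ∀ k, 1 ≤ k → k ≤ π.K →
        BRg n m c F (tgt π qa C γ (2*k-1)) = {π.a k} := by
      intro k h1 h2
      have he : tgt π qa C γ (2*k-1)
          = fun j => ((1-γ) * midw π k j + γ * qa k j) + γ * Nco C k :=
        funext fun j => by rw [tgt_odd π qa C γ k j h1]; ring
      rw [he, BRg_shift n m c F _ _ hrow]
      have hmw : π.a k ∈ BRg n m c F (midw π k) := by
        have hmf : midw π k = fun j =>
            (1 - π.Tsum k / (2*π.Tsum (k-1) + π.τ k)) * π.rho (k-1) j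
            + (π.Tsum k / (2*π.Tsum (k-1) + π.τ k)) * π.rho k j := rfl
        rw [hmf]
        have hA := Tsum_nonneg π π.K (k-1) hτ (by omega)
        have hτk := hτ k h1 h2
        have hTk := Tsum_step π k h1
        have hden : 0 < 2*π.Tsum (k-1) + π.τ k := by linarith
        refine BRg_combo_mem n m c F (π.rho (k-1)) (π.rho k) (π.a k) _ ?_ ?_
          (habr' k h1 h2) (habr k h1 h2)
        · apply div_nonneg _ hden.le
          rw [hTk]; linarith
        · rw [div_le_one hden, hTk]; linarith
      exact BRg_mix_singleton n m c F (midw π k) (qa k) (π.a k) γ hγ0 hγ1 hmw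
        (hqaBR k h1 h2)
    have hBeven : ∀ k, 1 ≤ k → k ≤ π.K →
        BRg n m c F (tgt π qa C γ (2*k)) = BRg n m c F (π.rho k) := by
      intro k h1 h2
      have he : tgt π qa C γ (2*k) = fun j => π.rho k j + γ * Mco C k :=
        funext fun j => tgt_even π qa C γ k j
      rw [he]
      exact BRg_shift n m c F (π.rho k) (γ * Mco C k) hrow
    have hρeqf : ∀ l, 1 ≤ l → l ≤ 2*π.K →
        (mixC π qa C γ).rho l = tgt π qa C γ l := fun l h1 h2 =>
      funext (mixC_rho π qa C γ hτ l h1 h2)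
    refine ⟨mixC π qa C γ, ⟨by show 1 ≤ 2*π.K; omega, ?_, ?_, ?_⟩, ?_⟩
    · -- segment conditions
      intro l hl
      simp only [Finset.mem_Icc] at hl
      have hl1 : 1 ≤ l := hl.1
      have hl2 : l ≤ 2*π.K := hl.2
      obtain ⟨hk1, hk2⟩ : 1 ≤ (l+1)/2 ∧ (l+1)/2 ≤ π.K := by omega
      have hτk := hτ _ hk1 hk2
      refine ⟨?_, by show 0 < π.τ ((l+1)/2)/2; linarith, han _ hk1 hk2⟩
      intro j hj
      show 0 ≤ (Tt π l * tgt π qa C γ l j - Tt π (l-1) * tgt π qa C γ (l-1) j)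
          / (π.τ ((l+1)/2) / 2)
      apply div_nonneg _ (by linarith)
      clear hτk hk1 hk2
      rcases Nat.even_or_odd l with ⟨k0, hk0⟩ | ⟨k0, hk0⟩
      · -- l = 2*k0 even
        have hle : l = 2*k0 := by omega
        subst hle
        have h1' : 1 ≤ k0 := by omega
        have h2' : k0 ≤ π.K := by omega
        rw [Tt_even, tgt_even, Tt_odd π k0 h1', tgt_odd π qa C γ k0 j h1']
        have hstep := rho_step π π.K k0 hτ h1' h2' j
        have hTk := Tsum_step π k0 h1'
        have hmw := midw_eq π π.K k0 hτ h1' h2' j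
        have hA := Tsum_nonneg π π.K (k0-1) hτ (by omega)
        have hrr' := hrho_nn (k0-1) (by omega) j hj
        have hqle := hCqa k0 h2' j hj
        have hkc : (1:ℝ) ≤ (k0:ℝ) := by exact_mod_cast h1'
        have hτ0 := hτ k0 h1' h2'
        have hp0 := hpnn k0 h1' h2' j hj
        have hexp : π.Tsum k0 * (π.rho k0 j + γ * Mco C k0)
            - (π.Tsum (k0-1) + π.τ k0 / 2)
              * ((1-γ) * midw π k0 j + γ * (qa k0 j + Nco C k0))
            = γ*(π.Tsum (k0-1) * π.rho (k0-1) j) + (π.τ k0/2)*(1+γ)*π.p k0 j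
              + γ*((π.Tsum (k0-1) + π.τ k0/2)*(C - qa k0 j)) + γ*(π.τ k0*(k0:ℝ)*C) := by
          simp only [Mco, Nco]
          linear_combination hstep + (γ*(2*(k0:ℝ)*C))*hTk - (1-γ)*hmw
        have t1 : 0 ≤ γ*(π.Tsum (k0-1) * π.rho (k0-1) j) :=
          mul_nonneg hγ0.le (mul_nonneg hA hrr')
        have t2 : 0 ≤ (π.τ k0/2)*(1+γ)*π.p k0 j :=
          mul_nonneg (mul_nonneg (by linarith) (by linarith)) hp0
        have t3 : 0 ≤ γ*((π.Tsum (k0-1) + π.τ k0/2)*(C - qa k0 j)) :=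
          mul_nonneg hγ0.le (mul_nonneg (by linarith) (by linarith))
        have t4 : 0 ≤ γ*(π.τ k0*(k0:ℝ)*C) :=
          mul_nonneg hγ0.le (mul_nonneg (mul_nonneg hτ0.le (by linarith)) (by linarith))
        nlinarith [hexp, t1, t2, t3, t4]
      · -- l = 2*k0+1 odd
        subst hk0
        have h2' : k0+1 ≤ π.K := by omega
        rw [show 2*k0+1 = 2*(k0+1)-1 from by omega,
          show 2*(k0+1)-1-1 = 2*k0 from by omega,
          Tt_odd π (k0+1) (by omega), tgt_odd π qa C γ (k0+1) j (by omega),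
          Tt_even, tgt_even]
        simp only [Nat.add_sub_cancel]
        have hmw := midw_eq π π.K (k0+1) hτ (by omega) h2' j
        simp only [Nat.add_sub_cancel] at hmw
        have hA := Tsum_nonneg π π.K k0 hτ (by omega)
        have hrr' := hrho_nn k0 (by omega) j hj
        have hrle := hCrho k0 (by omega) j hj
        have hq0 := hqapos (k0+1) (by omega) h2' j hj
        have hkc : (0:ℝ) ≤ (k0:ℝ) := by positivity
        have hτ0 := hτ (k0+1) (by omega) h2'
        have hp0 := hpnn (k0+1) (by omega) h2' j hj
        have hexp : (π.Tsum k0 + π.τ (k0+1)/2)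
              * ((1-γ) * midw π (k0+1) j + γ * (qa (k0+1) j + Nco C (k0+1)))
            - π.Tsum k0 * (π.rho k0 j + γ * Mco C k0)
            = (1-γ)*((π.τ (k0+1)/2)*π.p (k0+1) j)
              + γ*((π.Tsum k0 + π.τ (k0+1)/2)*qa (k0+1) j)
              + γ*(π.Tsum k0*(C - π.rho k0 j))
              + γ*((π.τ (k0+1)/2)*((2*(k0:ℝ)+1)*C)) := by
          simp only [Mco, Nco]
          push_cast
          linear_combination (1-γ)*hmw
        have t1 : 0 ≤ (1-γ)*((π.τ (k0+1)/2)*π.p (k0+1) j) :=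
          mul_nonneg (by linarith) (mul_nonneg (by linarith) hp0)
        have t2 : 0 ≤ γ*((π.Tsum k0 + π.τ (k0+1)/2)*qa (k0+1) j) :=
          mul_nonneg hγ0.le (mul_nonneg (by linarith) hq0.le)
        have t3 : 0 ≤ γ*(π.Tsum k0*(C - π.rho k0 j)) :=
          mul_nonneg hγ0.le (mul_nonneg hA (by linarith))
        have t4 : 0 ≤ γ*((π.τ (k0+1)/2)*((2*(k0:ℝ)+1)*C)) :=
          mul_nonneg hγ0.le (mul_nonneg (by linarith) (by nlinarith))
        nlinarith [hexp, t1, t2, t3, t4]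
    · -- a l ∈ BR(rho l)
      intro l hl
      simp only [Finset.mem_Icc] at hl
      have hl1 : 1 ≤ l := hl.1
      have hl2 : l ≤ 2*π.K := hl.2
      rw [hρeqf l hl1 hl2]
      rcases Nat.even_or_odd l with ⟨k0, hk0⟩ | ⟨k0, hk0⟩
      · have hle : l = 2*k0 := by omega
        subst hle
        have h1' : 1 ≤ k0 := by omega
        have h2' : k0 ≤ π.K := by omega
        rw [hBeven k0 h1' h2']
        show π.a ((2*k0+1)/2) ∈ _
        rw [show (2*k0+1)/2 = k0 from by omega]
        exact habr k0 h1' h2'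
      · subst hk0
        rw [show 2*k0+1 = 2*(k0+1)-1 from by omega,
          hBodd (k0+1) (by omega) (by omega)]
        show π.a ((2*(k0+1)-1+1)/2) ∈ ({π.a (k0+1)} : Set ℕ)
        rw [show (2*(k0+1)-1+1)/2 = k0+1 from by omega]
        rfl
    · -- a l ∈ BR(rho (l-1))
      intro l h2l hlK
      have hl2 : l ≤ 2*π.K := hlK
      rcases Nat.even_or_odd l with ⟨k0, hk0⟩ | ⟨k0, hk0⟩
      · have hle : l = 2*k0 := by omega
        subst hle
        have h1' : 1 ≤ k0 := by omega
        have h2' : k0 ≤ π.K := by omega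
        show π.a ((2*k0+1)/2) ∈ BRg n m c F ((mixC π qa C γ).rho (2*k0-1))
        rw [hρeqf (2*k0-1) (by omega) (by omega), hBodd k0 h1' h2',
          show (2*k0+1)/2 = k0 from by omega]
        rfl
      · subst hk0
        have h1' : 1 ≤ k0 := by omega
        show π.a ((2*k0+1+1)/2) ∈ BRg n m c F ((mixC π qa C γ).rho (2*k0+1-1))
        rw [show 2*k0+1-1 = 2*k0 from by omega, hρeqf (2*k0) (by omega) (by omega),
          hBeven k0 h1' (by omega), show (2*k0+1+1)/2 = k0+1 from by omega]
        have := hbr' (k0+1) (by omega) (by omega)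
        simpa using this
    · -- utility bound
      have hnd : ∀ l, 1 ≤ l → l ≤ 2*π.K → ¬ DGC.Degenerate n m c F (mixC π qa C γ) l := by
        intro l hl1 hl2 hdeg
        obtain ⟨i, j0, hij, hi, hj⟩ := hdeg
        rcases Nat.even_or_odd l with ⟨k0, hk0⟩ | ⟨k0, hk0⟩
        · have hle : l = 2*k0 := by omega
          subst hle
          have h1' : 1 ≤ k0 := by omega
          have hsing : BRg n m c F ((mixC π qa C γ).rho (2*k0-1)) = {π.a k0} := by
            rw [hρeqf (2*k0-1) (by omega) (by omega)]
            exact hBodd k0 h1' (by omega)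
          have hi1 := hi.1
          have hj1 := hj.1
          rw [hsing] at hi1 hj1
          exact hij (hi1.trans hj1.symm)
        · subst hk0
          have hsing : BRg n m c F ((mixC π qa C γ).rho (2*k0+1)) = {π.a (k0+1)} := by
            rw [hρeqf (2*k0+1) (by omega) (by omega),
              show 2*k0+1 = 2*(k0+1)-1 from by omega]
            exact hBodd (k0+1) (by omega) (by omega)
          have hi2 := hi.2
          have hj2 := hj.2
          rw [hsing] at hi2 hj2
          exact hij (hi2.trans hj2.symm)
      have hmuls : ∀ l, 1 ≤ l → l ≤ 2*π.K → ∀ j,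
          (mixC π qa C γ).τ l * (mixC π qa C γ).p l j
          = Tt π l * tgt π qa C γ l j - Tt π (l-1) * tgt π qa C γ (l-1) j := by
        intro l h1 h2 j
        obtain ⟨hk1, hk2⟩ : 1 ≤ (l+1)/2 ∧ (l+1)/2 ≤ π.K := by omega
        have hτ' : π.τ ((l+1)/2)/2 ≠ 0 := by
          have := hτ _ hk1 hk2; linarith
        show π.τ ((l+1)/2)/2 * ((Tt π l * tgt π qa C γ l j
            - Tt π (l-1) * tgt π qa C γ (l-1) j) / (π.τ ((l+1)/2)/2)) = _
        rw [mul_div_cancel₀ _ hτ']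
      have hpair : ∀ k ∈ Finset.Icc 1 π.K,
          (mixC π qa C γ).τ (2*k-1) * uP m F r ((mixC π qa C γ).p (2*k-1))
              ((mixC π qa C γ).a (2*k-1))
          + (mixC π qa C γ).τ (2*k) * uP m F r ((mixC π qa C γ).p (2*k))
              ((mixC π qa C γ).a (2*k))
          = π.τ k * uP m F r (π.p k) (π.a k)
            - γ*(π.Tsum k * Mco C k - π.Tsum (k-1) * Mco C (k-1)) := by
        intro k hk
        simp only [Finset.mem_Icc] at hk
        obtain ⟨hk1, hk2⟩ := hk
        have e1 : (2*k-1+1)/2 = k := by omega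
        have e2 : (2*k+1)/2 = k := by omega
        have ha1 : (mixC π qa C γ).a (2*k-1) = π.a k := by
          show π.a ((2*k-1+1)/2) = _; rw [e1]
        have ha2 : (mixC π qa C γ).a (2*k) = π.a k := by
          show π.a ((2*k+1)/2) = _; rw [e2]
        have ht1 : (mixC π qa C γ).τ (2*k-1) = π.τ k / 2 := by
          show π.τ ((2*k-1+1)/2) / 2 = _; rw [e1]
        have ht2 : (mixC π qa C γ).τ (2*k) = π.τ k / 2 := by
          show π.τ ((2*k+1)/2) / 2 = _; rw [e2]
        have h1 := hmuls (2*k-1) (by omega) (by omega)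
        have h2 := hmuls (2*k) (by omega) (by omega)
        rw [ht1] at h1
        rw [ht2] at h2
        have hstepj := rho_step π π.K k hτ hk1 hk2
        have hrowk := hrow (π.a k) (han k hk1 hk2)
        rw [ha1, ha2, ht1, ht2, uP_split, uP_split, uP_split]
        have hS : (π.τ k/2) * (∑ j ∈ Finset.Icc 1 m, F (π.a k) j * (mixC π qa C γ).p (2*k-1) j)
            + (π.τ k/2) * (∑ j ∈ Finset.Icc 1 m, F (π.a k) j * (mixC π qa C γ).p (2*k) j)
            = π.τ k * (∑ j ∈ Finset.Icc 1 m, F (π.a k) j * π.p k j)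
              + γ*(π.Tsum k * Mco C k - π.Tsum (k-1) * Mco C (k-1)) := by
          rw [Finset.mul_sum, Finset.mul_sum, ← Finset.sum_add_distrib]
          have hterm : ∀ j ∈ Finset.Icc 1 m,
              (π.τ k/2) * (F (π.a k) j * (mixC π qa C γ).p (2*k-1) j)
              + (π.τ k/2) * (F (π.a k) j * (mixC π qa C γ).p (2*k) j)
              = π.τ k * (F (π.a k) j * π.p k j)
                + (γ*(π.Tsum k * Mco C k - π.Tsum (k-1) * Mco C (k-1))) * F (π.a k) j := by
            intro j hj
            have h1j := h1 j
            have h2j := h2 j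
            rw [show 2*k-1-1 = 2*(k-1) from by omega, Tt_odd π k hk1,
              tgt_odd π qa C γ k j hk1, Tt_even, tgt_even] at h1j
            rw [Tt_even, tgt_even, Tt_odd π k hk1, tgt_odd π qa C γ k j hk1] at h2j
            have hsj := hstepj j
            linear_combination F (π.a k) j * h1j + F (π.a k) j * h2j + F (π.a k) j * hsj
          rw [Finset.sum_congr rfl hterm, Finset.sum_add_distrib, ← Finset.mul_sum,
            ← Finset.mul_sum, hrowk, mul_one]
        linear_combination (-1:ℝ) * hS
      have hU0eq : DGC.Util0 n m c F r (mixC π qa C γ)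
          = (∑ l ∈ Finset.Icc 1 (2*π.K), (mixC π qa C γ).τ l
              * uP m F r ((mixC π qa C γ).p l) ((mixC π qa C γ).a l))
            / (mixC π qa C γ).Tsum (2*π.K) := by
        unfold DGC.Util0
        congr 1
        refine Finset.sum_congr rfl fun l hl => ?_
        simp only [Finset.mem_Icc] at hl
        exact if_neg (hnd l hl.1 hl.2)
      have hsum2 : (∑ l ∈ Finset.Icc 1 (2*π.K), (mixC π qa C γ).τ l
            * uP m F r ((mixC π qa C γ).p l) ((mixC π qa C γ).a l))
          = (∑ k ∈ Finset.Icc 1 π.K, π.τ k * uP m F r (π.p k) (π.a k))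
            - γ * (π.Tsum π.K * Mco C π.K) := by
        rw [pairsum (fun l => (mixC π qa C γ).τ l
          * uP m F r ((mixC π qa C γ).p l) ((mixC π qa C γ).a l)) π.K]
        rw [Finset.sum_congr rfl hpair, Finset.sum_sub_distrib, ← Finset.mul_sum,
          tele (fun k => π.Tsum k * Mco C k) π.K, Tsum_zero]
        ring
      have hTK : (mixC π qa C γ).Tsum (2*π.K) = π.Tsum π.K := by
        rw [mixC_Tsum, Tt_even]
      have hTKpos : 0 < π.Tsum π.K := Tsum_pos π π.K π.K hτ hK1 le_rfl
      rw [hU0eq, hsum2, hTK, sub_div]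
      have h3 : γ * (π.Tsum π.K * Mco C π.K) / π.Tsum π.K = γ * (2*(π.K:ℝ)*C) := by
        rw [show Mco C π.K = 2*(π.K:ℝ)*C from rfl]
        field_simp
      rw [h3]
      have hUd : (∑ k ∈ Finset.Icc 1 π.K, π.τ k * uP m F r (π.p k) (π.a k)) / π.Tsum π.K
          = π.Util m F r := rfl
      rw [hUd]
      linarith [hγb]
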